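/- For finite groups G and H, m(G × H) = m(G) + m(H), where m denotes the maximal size of an irredundant generating set. -/

import Mathlib

/-- A finite subset of a group is irredundant if no element lies in the
subgroup generated by the remaining elements. -/
def Irredundant {G : Type*} [Group G] (s : Finset G) : Prop :=
  ∀ g ∈ s, g ∉ Subgroup.closure ((s : Set G) \ {g})

/-- `mRank G` : maximal size of an irredundant generating set of `G`. -/
noncomputable def mRank (G : Type*) [Group G] : ℕ :=
  sSup {n | ∃ s : Finset G, Irredundant s ∧ Subgroup.closure (s : Set G) = ⊤ ∧ s.card = n}

/-- `iRank G` : maximal size of an irredundant subset of `G`. -/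
noncomputable def iRank (G : Type*) [Group G] : ℕ :=
  sSup {n | ∃ s : Finset G, Irredundant s ∧ s.card = n}

/-- A family of subgroups is in general position. -/
def GenPos {G : Type*} [Group G] {ι : Type*} (H : ι → Subgroup G) : Prop :=
  ∀ I J : Finset ι, I ⊂ J → (⨅ j ∈ J, H j) < (⨅ i ∈ I, H i)

/-- Maximal size of a family of maximal subgroups in general position. -/
noncomputable def MaxDim (G : Type*) [Group G] : ℕ :=
  sSup {k | ∃ M : Fin k → Subgroup G, (∀ j, IsCoatom (M j)) ∧ GenPos M}

universe u

set_option linter.unusedVariables false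
set_option linter.unusedSectionVars false

open Subgroup

section PartA
variable {H : Type*} [Group H]

/-- subgroup generated by D-conjugates of S -/
def conjCl (D : Subgroup H) (S : Set H) : Subgroup H :=
  Subgroup.closure {x | ∃ d ∈ D, ∃ s ∈ S, d * s * d⁻¹ = x}

lemma conjCl_gen_mem {D : Subgroup H} {S : Set H} {d s : H} (hd : d ∈ D) (hs : s ∈ S) :
    d * s * d⁻¹ ∈ conjCl D S :=
  Subgroup.subset_closure ⟨d, hd, s, hs, rfl⟩

lemma subset_conjCl {D : Subgroup H} {S : Set H} {s : H} (hs : s ∈ S) : s ∈ conjCl D S := by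
  have := conjCl_gen_mem (D := D) (one_mem D) hs
  simpa using this

lemma closure_le_conjCl {D : Subgroup H} {S : Set H} : closure S ≤ conjCl D S :=
  closure_le _ |>.mpr fun s hs => subset_conjCl hs

lemma conjCl_mono {D D' : Subgroup H} {S S' : Set H} (hD : D ≤ D') (hS : S ⊆ S') :
    conjCl D S ≤ conjCl D' S' := by
  apply closure_le _ |>.mpr
  rintro x ⟨d, hd, s, hs, rfl⟩
  exact conjCl_gen_mem (hD hd) (hS hs)

lemma conjCl_le {D : Subgroup H} {S : Set H} {K : Subgroup H}
    (h : ∀ d ∈ D, ∀ s ∈ S, d * s * d⁻¹ ∈ K) : conjCl D S ≤ K := by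
  apply closure_le _ |>.mpr
  rintro x ⟨d, hd, s, hs, rfl⟩
  exact h d hd s hs

lemma conjCl_conj_mem {D : Subgroup H} {S : Set H} {d x : H} (hd : d ∈ D)
    (hx : x ∈ conjCl D S) : d * x * d⁻¹ ∈ conjCl D S := by
  induction hx using Subgroup.closure_induction with
  | mem y hy =>
    obtain ⟨e, he, s, hs, rfl⟩ := hy
    have : d * (e * s * e⁻¹) * d⁻¹ = (d * e) * s * (d * e)⁻¹ := by group
    rw [this]
    exact conjCl_gen_mem (mul_mem hd he) hs
  | one => simpa using one_mem _
  | mul y z _ _ hy hz =>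
    have : d * (y * z) * d⁻¹ = (d * y * d⁻¹) * (d * z * d⁻¹) := by group
    rw [this]; exact mul_mem hy hz
  | inv y _ hy =>
    have : d * y⁻¹ * d⁻¹ = (d * y * d⁻¹)⁻¹ := by group
    rw [this]; exact inv_mem hy

/-- maps: the image of a conjCl contains the conjCl of images -/
lemma conjCl_map_ge {H' : Type*} [Group H'] (f : H →* H') {D : Subgroup H} {S : Set H} :
    conjCl (D.map f) (f '' S) ≤ (conjCl D S).map f := by
  apply conjCl_le
  rintro d' ⟨d, hd, rfl⟩ s' ⟨s, hs, rfl⟩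
  refine ⟨d * s * d⁻¹, conjCl_gen_mem hd hs, by simp⟩

lemma conjCl_top_normal {S : Set H} : (conjCl ⊤ S).Normal := by
  constructor
  intro x hx g
  exact conjCl_conj_mem (mem_top g) hx

lemma sup_normal {A B : Subgroup H} (hA : A.Normal) (hB : B.Normal) : (A ⊔ B).Normal := by
  constructor
  intro x hx g
  have : A ⊔ B = closure ((A : Set H) ∪ B) := by
    rw [Subgroup.closure_union, Subgroup.closure_eq, Subgroup.closure_eq]
  rw [this] at hx ⊢
  induction hx using Subgroup.closure_induction with
  | mem y hy =>
    apply Subgroup.subset_closure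
    rcases hy with hy | hy
    · exact Or.inl (hA.conj_mem y hy g)
    · exact Or.inr (hB.conj_mem y hy g)
  | one => simpa using one_mem _
  | mul y z _ _ hy hz =>
    have : g * (y * z) * g⁻¹ = (g * y * g⁻¹) * (g * z * g⁻¹) := by group
    rw [this]; exact mul_mem hy hz
  | inv y _ hy =>
    have : g * y⁻¹ * g⁻¹ = (g * y * g⁻¹)⁻¹ := by group
    rw [this]; exact inv_mem hy

end PartA

section PartB
variable {G : Type*} [Group G]

lemma irredundant_coe_erase {G : Type*} [Group G] [DecidableEq G] (s : Finset G) (g : G) :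
    ((s : Set G) \ {g}) = ((s.erase g : Finset G) : Set G) := by
  rw [Finset.coe_erase]

lemma one_not_mem_irredundant {s : Finset G} (hs : Irredundant s) : (1 : G) ∉ s := by
  intro h1
  exact hs 1 h1 (one_mem _)

def mSet (G : Type*) [Group G] : Set ℕ :=
  {n | ∃ s : Finset G, Irredundant s ∧ Subgroup.closure (s : Set G) = ⊤ ∧ s.card = n}

lemma mRank_eq_sSup : mRank G = sSup (mSet G) := rfl

lemma mSet_bddAbove [Finite G] : BddAbove (mSet G) := by
  cases nonempty_fintype G
  refine ⟨Fintype.card G, ?_⟩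
  rintro n ⟨s, _, _, rfl⟩
  exact Finset.card_le_univ s

/-- any generating finset contains an irredundant generating subset -/
lemma exists_irredundant_subset_aux [DecidableEq G] : ∀ (n : ℕ) (s : Finset G), s.card ≤ n →
    Subgroup.closure (s : Set G) = ⊤ →
    ∃ t ⊆ s, Irredundant t ∧ Subgroup.closure (t : Set G) = ⊤ := by
  intro n
  induction n with
  | zero =>
    intro s hcard hs
    exact ⟨s, le_refl s, fun g hg => absurd (Finset.card_eq_zero.mp (Nat.le_zero.mp hcard) ▸ hg)
      (by simp), hs⟩
  | succ n ih =>
  intro s hcard hs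
  by_cases hirr : Irredundant s
  · exact ⟨s, le_refl s, hirr, hs⟩
  · simp only [Irredundant, not_forall] at hirr
    obtain ⟨g, hg, hgmem⟩ := hirr
    rw [not_not] at hgmem
    have hcl : Subgroup.closure ((s.erase g : Finset G) : Set G) = ⊤ := by
      rw [← irredundant_coe_erase]
      have : Subgroup.closure ((s : Set G) \ {g}) = Subgroup.closure (s : Set G) := by
        apply le_antisymm (Subgroup.closure_mono (Set.diff_subset))
        apply Subgroup.closure_le _ |>.mpr
        intro x hx
        by_cases hxg : x = g
        · subst hxg; exact hgmem
        · exact Subgroup.subset_closure ⟨hx, hxg⟩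
      rw [this, hs]
    obtain ⟨t, ht, h1, h2⟩ := ih (s.erase g)
      (by have := Finset.card_erase_lt_of_mem hg; omega) hcl
    exact ⟨t, ht.trans (Finset.erase_subset g s), h1, h2⟩

lemma exists_irredundant_subset [DecidableEq G] (s : Finset G) (hs : Subgroup.closure (s : Set G) = ⊤) :
    ∃ t ⊆ s, Irredundant t ∧ Subgroup.closure (t : Set G) = ⊤ :=
  exists_irredundant_subset_aux s.card s (le_refl _) hs

lemma mSet_nonempty [Finite G] : (mSet G).Nonempty := by
  classical
  cases nonempty_fintype G
  obtain ⟨t, _, h1, h2⟩ := exists_irredundant_subset (Finset.univ : Finset G)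
    (by rw [Finset.coe_univ, Subgroup.closure_univ])
  exact ⟨t.card, t, h1, h2, rfl⟩

lemma card_le_mRank [Finite G] {s : Finset G} (h1 : Irredundant s)
    (h2 : Subgroup.closure (s : Set G) = ⊤) : s.card ≤ mRank G :=
  le_csSup mSet_bddAbove ⟨s, h1, h2, rfl⟩

lemma exists_mRank_attained (G : Type*) [Group G] [Finite G] :
    ∃ s : Finset G, Irredundant s ∧ Subgroup.closure (s : Set G) = ⊤ ∧ s.card = mRank G :=
  Nat.sSup_mem mSet_nonempty mSet_bddAbove

lemma mRank_le [Finite G] {n : ℕ}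
    (h : ∀ s : Finset G, Irredundant s → Subgroup.closure (s : Set G) = ⊤ → s.card ≤ n) :
    mRank G ≤ n := by
  apply csSup_le mSet_nonempty
  rintro m ⟨s, h1, h2, rfl⟩
  exact h s h1 h2

end PartB

section PartC
variable {G H : Type*} [Group G] [Group H]

lemma closureInsertOne {G : Type*} [Group G] (S : Set G) :
    Subgroup.closure (insert (1 : G) S) = Subgroup.closure S := by
  apply le_antisymm
  · apply Subgroup.closure_le _ |>.mpr
    rintro x (rfl | hx)
    · exact one_mem _
    · exact Subgroup.subset_closure hx
  · exact Subgroup.closure_mono (Set.subset_insert _ _)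

lemma memClosureImage {G' : Type*} [Group G'] (f : G →* G') {S : Set G} {x : G}
    (hx : x ∈ Subgroup.closure S) : f x ∈ Subgroup.closure (f '' S) := by
  rw [← MonoidHom.map_closure]
  exact Subgroup.mem_map_of_mem f hx

lemma mRank_prod_ge [Finite G] [Finite H] :
    mRank G + mRank H ≤ mRank (G × H) := by
  classical
  obtain ⟨u, hu1, hu2, hu3⟩ := exists_mRank_attained G
  obtain ⟨v, hv1, hv2, hv3⟩ := exists_mRank_attained H
  set w : Finset (G × H) :=
    u.image (MonoidHom.inl G H) ∪ v.image (MonoidHom.inr G H) with hw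
  have hinj_l : Function.Injective (MonoidHom.inl G H) := fun a b hab => by
    simpa using congrArg Prod.fst hab
  have hinj_r : Function.Injective (MonoidHom.inr G H) := fun a b hab => by
    simpa using congrArg Prod.snd hab
  have hdisj : Disjoint (u.image (MonoidHom.inl G H)) (v.image (MonoidHom.inr G H)) := by
    rw [Finset.disjoint_left]
    rintro x hx hx'
    obtain ⟨g, hg, rfl⟩ := Finset.mem_image.mp hx
    obtain ⟨h, hh, heq⟩ := Finset.mem_image.mp hx'
    have hg1 : g = 1 := by simpa using (congrArg Prod.fst heq).symm
    exact one_not_mem_irredundant hu1 (hg1 ▸ hg)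
  have hcard : w.card = mRank G + mRank H := by
    rw [hw, Finset.card_union_of_disjoint hdisj, Finset.card_image_of_injective _ hinj_l,
      Finset.card_image_of_injective _ hinj_r, hu3, hv3]
  have hgen : Subgroup.closure (w : Set (G × H)) = ⊤ := by
    rw [eq_top_iff]
    rintro ⟨g, h⟩ -
    have h1 : ((g, 1) : G × H) ∈ Subgroup.closure (w : Set (G × H)) := by
      have : ((g, 1) : G × H) ∈ Subgroup.closure ((MonoidHom.inl G H) '' u) := by
        have := memClosureImage (MonoidHom.inl G H) (S := (u : Set G)) (x := g)
          (by rw [hu2]; trivial)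
        simpa using this
      refine Subgroup.closure_mono ?_ this
      rw [hw]; intro x hx
      simp only [Finset.coe_union, Set.mem_union, Finset.coe_image]
      exact Or.inl hx
    have h2 : ((1, h) : G × H) ∈ Subgroup.closure (w : Set (G × H)) := by
      have : ((1, h) : G × H) ∈ Subgroup.closure ((MonoidHom.inr G H) '' v) := by
        have := memClosureImage (MonoidHom.inr G H) (S := (v : Set H)) (x := h)
          (by rw [hv2]; trivial)
        simpa using this
      refine Subgroup.closure_mono ?_ this
      rw [hw]; intro x hx
      simp only [Finset.coe_union, Set.mem_union, Finset.coe_image]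
      exact Or.inr hx
    have : ((g, h) : G × H) = (g, 1) * (1, h) := by simp
    rw [this]; exact mul_mem h1 h2
  have hirr : Irredundant w := by
    rintro ⟨g, h⟩ hgh hmem
    rw [hw] at hgh
    rcases Finset.mem_union.mp hgh with hx | hx
    · obtain ⟨g₀, hg₀, heq⟩ := Finset.mem_image.mp hx
      have hh1 : h = 1 := by simpa using (congrArg Prod.snd heq).symm
      subst hh1
      have hgg : g₀ = g := by simpa using congrArg Prod.fst heq
      subst hgg
      have := memClosureImage (MonoidHom.fst G H) hmem
      simp only [MonoidHom.coe_fst] at this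
      have hsub : Prod.fst '' ((w : Set (G × H)) \ {((g₀, 1) : G × H)}) ⊆
          insert (1 : G) ((u : Set G) \ {g₀}) := by
        rintro x ⟨⟨a, b⟩, ⟨hab, hne⟩, rfl⟩
        rw [hw] at hab
        simp only [Finset.coe_union, Set.mem_union, Finset.coe_image] at hab
        rcases hab with ⟨g', hg', heq'⟩ | ⟨h', hh', heq'⟩
        · have : a = g' ∧ b = 1 := by
            constructor <;> · have := heq'; cases this; simp
          obtain ⟨rfl, rfl⟩ := this
          right
          refine ⟨hg', ?_⟩
          intro hcon
          exact hne (by rw [Set.mem_singleton_iff] at hcon ⊢; simp only [] at hcon; simp [show _ = g₀ from hcon])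
        · have : a = 1 := by cases heq'; simp
          left; simp [this]
      have h2 := Subgroup.closure_mono hsub this
      rw [closureInsertOne] at h2
      exact hu1 g₀ hg₀ h2
    · obtain ⟨h₀, hh₀, heq⟩ := Finset.mem_image.mp hx
      have hg1 : g = 1 := by simpa using (congrArg Prod.fst heq).symm
      subst hg1
      have hhh : h₀ = h := by simpa using congrArg Prod.snd heq
      subst hhh
      have := memClosureImage (MonoidHom.snd G H) hmem
      simp only [MonoidHom.coe_snd] at this
      have hsub : Prod.snd '' ((w : Set (G × H)) \ {((1, h₀) : G × H)}) ⊆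
          insert (1 : H) ((v : Set H) \ {h₀}) := by
        rintro x ⟨⟨a, b⟩, ⟨hab, hne⟩, rfl⟩
        rw [hw] at hab
        simp only [Finset.coe_union, Set.mem_union, Finset.coe_image] at hab
        rcases hab with ⟨g', hg', heq'⟩ | ⟨h', hh', heq'⟩
        · have : b = 1 := by cases heq'; simp
          left; simp [this]
        · have : a = 1 ∧ b = h' := by
            constructor <;> · have := heq'; cases this; simp
          obtain ⟨rfl, rfl⟩ := this
          right
          refine ⟨hh', ?_⟩
          intro hcon
          simp only [Set.mem_singleton_iff] at hcon
          exact hne (by simp [hcon])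
      have h2 := Subgroup.closure_mono hsub this
      rw [closureInsertOne] at h2
      exact hv1 h₀ hh₀ h2
  calc mRank G + mRank H = w.card := hcard.symm
    _ ≤ mRank (G × H) := card_le_mRank hirr hgen

end PartC

section PartD
section Main
variable {H : Type*} [Group H]

/-- conjugation stability transfers through closure -/
lemma conj_closure_le {S : Set H} {d : H} {K : Subgroup H}
    (h : ∀ s ∈ S, d * s * d⁻¹ ∈ K) : ∀ x ∈ Subgroup.closure S, d * x * d⁻¹ ∈ K := by
  intro x hx
  induction hx using Subgroup.closure_induction with
  | mem y hy => exact h y hy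
  | one => simpa using one_mem K
  | mul y z _ _ hy hz =>
    have : d * (y * z) * d⁻¹ = (d * y * d⁻¹) * (d * z * d⁻¹) := by group
    rw [this]; exact mul_mem hy hz
  | inv y _ hy =>
    have : d * y⁻¹ * d⁻¹ = (d * y * d⁻¹)⁻¹ := by group
    rw [this]; exact inv_mem hy

/-- conjugation invariance of `C ⊔ conjCl D S` under `D` -/
lemma W_conj_mem {C D : Subgroup H} {S : Set H}
    (hCn : ∀ d ∈ D, ∀ c ∈ C, d * c * d⁻¹ ∈ C) {d : H} (hd : d ∈ D) :
    ∀ x ∈ C ⊔ conjCl D S, d * x * d⁻¹ ∈ C ⊔ conjCl D S := by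
  have hrw : C ⊔ conjCl D S =
      Subgroup.closure ((C : Set H) ∪ (conjCl D S : Set H)) := by
    rw [Subgroup.closure_union, Subgroup.closure_eq, Subgroup.closure_eq]
  rw [hrw]
  apply conj_closure_le
  rintro s (hs | hs)
  · exact hrw ▸ (le_sup_left (a := C) (b := conjCl D S) (hCn d hd s hs))
  · exact hrw ▸ (le_sup_right (a := C) (b := conjCl D S) (conjCl_conj_mem hd hs))

end Main

variable {G H : Type*} [Group G] [Group H]

lemma main_le [Finite G] [Finite H] [DecidableEq H]
    (ht2 : ∀ (C D : Subgroup H) (v : Finset H), C ≤ D →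
      (∀ d ∈ D, ∀ c ∈ C, d * c * d⁻¹ ∈ C) →
      C ⊔ conjCl D (v : Set H) = ⊤ →
      (∀ h ∈ v, h ∉ C ⊔ conjCl D ((v.erase h : Finset H) : Set H)) →
      v.card ≤ mRank H) :
    mRank (G × H) ≤ mRank G + mRank H := by
  classical
  apply mRank_le
  intro s hs_irr hs_gen
  -- A : minimal subset whose first projection generates G
  set 𝒜 : Finset (Finset (G × H)) := s.powerset.filter
    (fun A => Subgroup.closure ((A.image Prod.fst : Finset G) : Set G) = ⊤) with h𝒜
  have hfst_surj : Function.Surjective (MonoidHom.fst G H) := fun g => ⟨(g, 1), rfl⟩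
  have hsA : s ∈ 𝒜 := by
    rw [h𝒜, Finset.mem_filter]
    refine ⟨Finset.mem_powerset_self s, ?_⟩
    rw [Finset.coe_image, ← MonoidHom.coe_fst, ← MonoidHom.map_closure, hs_gen]
    exact Subgroup.map_top_of_surjective _ hfst_surj
  obtain ⟨A, hA𝒜, hAmin⟩ := Finset.exists_min_image 𝒜 Finset.card ⟨s, hsA⟩
  rw [h𝒜, Finset.mem_filter] at hA𝒜
  obtain ⟨hA_pow, hA_gen⟩ := hA𝒜
  have hA_sub : A ⊆ s := Finset.mem_powerset.mp hA_pow
  have hAerase : ∀ a ∈ A,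
      Subgroup.closure (((A.erase a).image Prod.fst : Finset G) : Set G) ≠ ⊤ := by
    intro a ha hcon
    have hmem : A.erase a ∈ 𝒜 := by
      rw [h𝒜, Finset.mem_filter]
      exact ⟨Finset.mem_powerset.mpr ((Finset.erase_subset a A).trans hA_sub), hcon⟩
    have := hAmin _ hmem
    have hlt := Finset.card_erase_lt_of_mem ha
    omega
  have hinjA : Set.InjOn Prod.fst (A : Set (G × H)) := by
    intro a₁ h₁ a₂ h₂ heq
    by_contra hne
    apply hAerase a₂ h₂
    have himg : (A.erase a₂).image Prod.fst = A.image Prod.fst := by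
      apply Finset.Subset.antisymm
      · exact Finset.image_subset_image (Finset.erase_subset _ _)
      · intro g hg
        obtain ⟨a, ha, rfl⟩ := Finset.mem_image.mp hg
        by_cases haa : a = a₂
        · subst haa
          exact Finset.mem_image.mpr ⟨a₁, Finset.mem_erase.mpr ⟨hne, h₁⟩, heq⟩
        · exact Finset.mem_image.mpr ⟨a, Finset.mem_erase.mpr ⟨haa, ha⟩, rfl⟩
    rw [himg]
    exact hA_gen
  -- u = the projection, an irredundant generating set of G
  set u : Finset G := A.image Prod.fst with hu
  have hu_card : u.card = A.card := Finset.card_image_of_injOn hinjA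
  have hu_irr : Irredundant u := by
    intro g₀ hg₀ hmem
    obtain ⟨a₀, ha₀, rfl⟩ := Finset.mem_image.mp hg₀
    apply hAerase a₀ ha₀
    have hset : ((u : Set G) \ {a₀.1}) = (((A.erase a₀).image Prod.fst : Finset G) : Set G) := by
      ext x
      constructor
      · rintro ⟨hx, hne⟩
        obtain ⟨a, ha, rfl⟩ := Finset.mem_image.mp hx
        have : a ≠ a₀ := by
          intro h; subst h; exact hne rfl
        exact Finset.mem_coe.mpr (Finset.mem_image.mpr ⟨a, Finset.mem_erase.mpr ⟨this, ha⟩, rfl⟩)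
      · intro hx
        obtain ⟨a, ha, rfl⟩ := Finset.mem_image.mp (Finset.mem_coe.mp hx)
        obtain ⟨hane, haA⟩ := Finset.mem_erase.mp ha
        refine ⟨Finset.mem_coe.mpr (Finset.mem_image.mpr ⟨a, haA, rfl⟩), ?_⟩
        intro hcon
        exact hane (hinjA haA ha₀ hcon)
    rw [hset] at hmem
    rw [eq_top_iff, ← hA_gen]
    apply Subgroup.closure_le _ |>.mpr
    intro x hx
    obtain ⟨a, ha, rfl⟩ := Finset.mem_image.mp (Finset.mem_coe.mp hx)
    by_cases hx0 : a.1 = a₀.1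
    · rw [hx0]; exact hmem
    · exact Subgroup.subset_closure
        (Finset.mem_coe.mpr (Finset.mem_image.mpr ⟨a, Finset.mem_erase.mpr
          (⟨fun h => hx0 (by rw [h]), ha⟩ : a ≠ a₀ ∧ a ∈ A), rfl⟩))
  have hu_gen : Subgroup.closure (u : Set G) = ⊤ := hA_gen
  have hAcard_le : A.card ≤ mRank G := hu_card ▸ card_le_mRank hu_irr hu_gen
  -- K and the correction
  set K : Subgroup (G × H) := Subgroup.closure (A : Set (G × H)) with hK
  have hKmap : Subgroup.map (MonoidHom.fst G H) K = ⊤ := by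
    rw [hK, MonoidHom.map_closure]
    rw [hu] at hu_gen
    rw [Finset.coe_image] at hu_gen
    exact hu_gen
  have hsurj : ∀ p : G × H, ∃ k, k ∈ K ∧ k.1 = p.1 := by
    intro p
    have : p.1 ∈ Subgroup.map (MonoidHom.fst G H) K := by rw [hKmap]; trivial
    obtain ⟨k, hk, hk2⟩ := this
    exact ⟨k, hk, hk2⟩
  set φ : G × H → H := fun p => ((Classical.choose (hsurj p)).2)⁻¹ * p.2 with hφ
  have hφK : ∀ p : G × H, Classical.choose (hsurj p) ∈ K :=
    fun p => (Classical.choose_spec (hsurj p)).1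
  have hφ1 : ∀ p : G × H, (Classical.choose (hsurj p)).1 = p.1 :=
    fun p => (Classical.choose_spec (hsurj p)).2
  have hφeq : ∀ p : G × H, ((1 : G), φ p) = (Classical.choose (hsurj p))⁻¹ * p := by
    intro p
    have h1 : ((Classical.choose (hsurj p))⁻¹ * p).1 = 1 := by
      have := hφ1 p
      simp [Prod.fst_mul, this]
    have h2 : ((Classical.choose (hsurj p))⁻¹ * p).2 = φ p := rfl
    exact Prod.ext h1.symm h2.symm
  set B : Finset (G × H) := s \ A with hB
  have hABs : A ∪ B = s := Finset.union_sdiff_of_subset hA_sub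
  -- join identity
  have hjoin : ∀ B' : Finset (G × H),
      K ⊔ Subgroup.closure ((B'.image (fun b => ((1 : G), φ b)) : Finset (G × H)) : Set (G × H))
      = K ⊔ Subgroup.closure (B' : Set (G × H)) := by
    intro B'
    apply le_antisymm
    · apply sup_le le_sup_left
      apply Subgroup.closure_le _ |>.mpr
      intro x hx
      obtain ⟨b, hb, rfl⟩ := Finset.mem_image.mp (Finset.mem_coe.mp hx)
      rw [hφeq b]
      exact mul_mem (inv_mem (Subgroup.mem_sup_left (hφK b)))
        (Subgroup.mem_sup_right (Subgroup.subset_closure (Finset.mem_coe.mpr hb)))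
    · apply sup_le le_sup_left
      apply Subgroup.closure_le _ |>.mpr
      intro b hb
      have : b = (Classical.choose (hsurj b)) * ((1 : G), φ b) := by
        rw [hφeq b]; group
      rw [this]
      exact mul_mem (Subgroup.mem_sup_left (hφK b))
        (Subgroup.mem_sup_right (Subgroup.subset_closure
          (Finset.mem_coe.mpr (Finset.mem_image.mpr ⟨b, Finset.mem_coe.mp hb, rfl⟩))))
  have hKclosure : ∀ b ∈ B, K ⊔ Subgroup.closure ((B.erase b : Finset (G × H)) : Set (G × H))
      = Subgroup.closure ((s.erase b : Finset (G × H)) : Set (G × H)) := by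
    intro b hb
    have hset : (A : Set (G × H)) ∪ (B.erase b : Finset (G × H)) = (s.erase b : Set (G × H)) := by
      ext x
      simp only [Set.mem_union, Finset.coe_erase, Set.mem_diff, Set.mem_singleton_iff,
        Finset.mem_coe]
      constructor
      · rintro (hx | ⟨hx, hne⟩)
        · refine ⟨hA_sub hx, ?_⟩
          intro h; subst h
          exact (Finset.mem_sdiff.mp hb).2 hx
        · rw [hB] at hx
          exact ⟨(Finset.mem_sdiff.mp hx).1, hne⟩
      · rintro ⟨hx, hne⟩
        by_cases hxA : x ∈ A
        · exact Or.inl hxA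
        · exact Or.inr ⟨Finset.mem_sdiff.mpr ⟨hx, hxA⟩, hne⟩
    rw [hK, ← Subgroup.closure_union, hset]
  have hB_irr : ∀ b ∈ B, ((1 : G), φ b) ∉
      K ⊔ Subgroup.closure (((B.erase b).image (fun b => ((1 : G), φ b)) : Finset (G × H)) :
        Set (G × H)) := by
    intro b hb hcon
    rw [hjoin, hKclosure b hb] at hcon
    have hbs : b ∈ s := (Finset.mem_sdiff.mp hb).1
    apply hs_irr b hbs
    rw [irredundant_coe_erase]
    have hKle : K ≤ Subgroup.closure ((s.erase b : Finset (G × H)) : Set (G × H)) := by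
      rw [hK]
      apply Subgroup.closure_mono
      intro x hx
      refine Finset.mem_coe.mpr (Finset.mem_erase.mpr ⟨?_, hA_sub (Finset.mem_coe.mp hx)⟩)
      intro h; subst h
      exact (Finset.mem_sdiff.mp hb).2 (Finset.mem_coe.mp hx)
    have hmm : (Classical.choose (hsurj b)) * ((1 : G), φ b) ∈
        Subgroup.closure ((s.erase b : Finset (G × H)) : Set (G × H)) :=
      mul_mem (hKle (hφK b)) hcon
    rwa [hφeq b, mul_inv_cancel_left] at hmm
  have hφinj : Set.InjOn φ (B : Set (G × H)) := by
    intro b₁ h₁ b₂ h₂ heq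
    by_contra hne
    apply hB_irr b₁ (Finset.mem_coe.mp h₁)
    have : ((1 : G), φ b₁) = ((1 : G), φ b₂) := by rw [heq]
    rw [this]
    refine Subgroup.mem_sup_right (Subgroup.subset_closure (Finset.mem_coe.mpr
      (Finset.mem_image.mpr ⟨b₂, Finset.mem_erase.mpr ⟨fun h => hne (by rw [h]), h₂⟩, rfl⟩)))
  set v : Finset H := B.image φ with hv
  have hv_card : v.card = B.card := Finset.card_image_of_injOn hφinj
  -- C D
  set C : Subgroup H := K.comap (MonoidHom.inr G H) with hC
  set D : Subgroup H := K.map (MonoidHom.snd G H) with hD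
  have hCD : C ≤ D := by
    intro h hh
    rw [hC, Subgroup.mem_comap] at hh
    rw [hD]
    exact ⟨((1 : G), h), hh, rfl⟩
  have hCn : ∀ d ∈ D, ∀ c ∈ C, d * c * d⁻¹ ∈ C := by
    intro d hd c hc
    rw [hD] at hd
    obtain ⟨k, hk, hk2⟩ := hd
    rw [hC, Subgroup.mem_comap] at hc ⊢
    have : (MonoidHom.inr G H) (d * c * d⁻¹) = k * ((MonoidHom.inr G H) c) * k⁻¹ := by
      apply Prod.ext
      · simp
      · simp [← hk2]
    rw [this]
    exact mul_mem (mul_mem hk hc) (inv_mem hk)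
  -- transfer lemma
  have htransfer : ∀ (S : Set H) (h₀ : H),
      (((1 : G), h₀) ∈ K ⊔ Subgroup.closure ((fun h => ((1 : G), h)) '' S)) ↔
      h₀ ∈ C ⊔ conjCl D S := by
    intro S h₀
    set W : Subgroup H := C ⊔ conjCl D S with hW
    have hWinv : ∀ d ∈ D, ∀ x ∈ W, d * x * d⁻¹ ∈ W := fun d hd => W_conj_mem hCn hd
    constructor
    · intro hmem
      -- build the subgroup U
      set U : Subgroup (G × H) :=
        { carrier := {p : G × H | ∃ k ∈ K, ∃ w ∈ W, p = k * ((1 : G), w)},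
          one_mem' := ⟨1, one_mem K, 1, one_mem W, by simp; rfl⟩,
          mul_mem' := by
            rintro p₁ p₂ ⟨k₁, hk₁, w₁, hw₁, rfl⟩ ⟨k₂, hk₂, w₂, hw₂, rfl⟩
            refine ⟨k₁ * k₂, mul_mem hk₁ hk₂, (k₂.2)⁻¹ * w₁ * k₂.2 * w₂, ?_, ?_⟩
            · have hd : k₂.2 ∈ D := ⟨k₂, hk₂, rfl⟩
              have := hWinv _ (inv_mem hd) w₁ hw₁
              have h2 : (k₂.2)⁻¹ * w₁ * ((k₂.2)⁻¹)⁻¹ = (k₂.2)⁻¹ * w₁ * k₂.2 := by group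
              rw [h2] at this
              exact mul_mem this hw₂
            · apply Prod.ext
              · simp
              · simp only [Prod.snd_mul]
                group
          inv_mem' := by
            rintro p ⟨k, hk, w, hw, rfl⟩
            refine ⟨k⁻¹, inv_mem hk, k.2 * w⁻¹ * (k.2)⁻¹, ?_, ?_⟩
            · exact hWinv _ ⟨k, hk, rfl⟩ _ (inv_mem hw)
            · apply Prod.ext
              · simp
              · simp only [Prod.snd_mul, Prod.snd_inv]
                group } with hU
      have hle : K ⊔ Subgroup.closure ((fun h => ((1 : G), h)) '' S) ≤ U := by
        apply sup_le
        · intro k hk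
          exact ⟨k, hk, 1, one_mem W, by simp⟩
        · apply Subgroup.closure_le _ |>.mpr
          rintro x ⟨h, hh, rfl⟩
          refine ⟨1, one_mem K, h, ?_, by simp⟩
          exact Subgroup.mem_sup_right (subset_conjCl hh)
      obtain ⟨k, hk, w, hw, heq⟩ := hle hmem
      have hk1 : k.1 = 1 := by
        have := congrArg Prod.fst heq
        simpa using this.symm
      have hkC : k.2 ∈ C := by
        rw [hC, Subgroup.mem_comap]
        have : (MonoidHom.inr G H) k.2 = k := by
          apply Prod.ext
          · simp [hk1]
          · simp
        rw [this]
        exact hk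
      have hh₀ : h₀ = k.2 * w := by
        have := congrArg Prod.snd heq
        simpa using this
      rw [hh₀]
      exact mul_mem (Subgroup.mem_sup_left hkC) hw
    · intro hmem
      set V : Subgroup H := (K ⊔ Subgroup.closure ((fun h => ((1 : G), h)) '' S)).comap
        (MonoidHom.inr G H) with hV
      have hCV : C ≤ V := by
        intro c hc
        rw [hV, Subgroup.mem_comap]
        exact Subgroup.mem_sup_left (Subgroup.mem_comap.mp (hC ▸ hc))
      have hconjV : conjCl D S ≤ V := by
        apply conjCl_le
        intro d hd x hx
        rw [hD] at hd
        obtain ⟨k, hk, hk2⟩ := hd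
        rw [hV, Subgroup.mem_comap]
        have : (MonoidHom.inr G H) (d * x * d⁻¹) = k * ((1 : G), x) * k⁻¹ := by
          apply Prod.ext
          · simp
          · simp [← hk2]
        rw [this]
        refine mul_mem (mul_mem (Subgroup.mem_sup_left hk) ?_) (inv_mem (Subgroup.mem_sup_left hk))
        exact Subgroup.mem_sup_right (Subgroup.subset_closure ⟨x, hx, rfl⟩)
      have : W ≤ V := sup_le hCV hconjV
      exact Subgroup.mem_comap.mp (this hmem)
  -- (i)
  have hi : C ⊔ conjCl D (v : Set H) = ⊤ := by
    rw [eq_top_iff]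
    intro h₀ _
    apply (htransfer _ h₀).mp
    have himg : (fun h => ((1 : G), h)) '' (v : Set H) =
        ((B.image (fun b => ((1 : G), φ b)) : Finset (G × H)) : Set (G × H)) := by
      rw [hv, Finset.coe_image, Finset.coe_image, ← Set.image_comp]
      rfl
    rw [himg, hjoin, hK, ← Subgroup.closure_union]
    have : (A : Set (G × H)) ∪ (B : Set (G × H)) = (s : Set (G × H)) := by
      rw [← Finset.coe_union, hABs]
    rw [this, hs_gen]
    trivial
  -- (ii)
  have hii : ∀ h ∈ v, h ∉ C ⊔ conjCl D ((v.erase h : Finset H) : Set H) := by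
    intro h hh hcon
    obtain ⟨b, hb, rfl⟩ := Finset.mem_image.mp hh
    have herase : v.erase (φ b) = (B.erase b).image φ := by
      ext x
      simp only [Finset.mem_erase, Finset.mem_image, hv]
      constructor
      · rintro ⟨hne, b', hb', rfl⟩
        exact ⟨b', ⟨fun h => hne (by rw [h]), hb'⟩, rfl⟩
      · rintro ⟨b', ⟨hne, hb'⟩, rfl⟩
        refine ⟨?_, b', hb', rfl⟩
        intro hcon2
        exact hne (hφinj hb' hb hcon2)
    rw [herase] at hcon
    have := (htransfer _ (φ b)).mpr hcon
    apply hB_irr b hb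
    have himg : (fun h => ((1 : G), h)) '' (((B.erase b).image φ : Finset H) : Set H) =
        (((B.erase b).image (fun b => ((1 : G), φ b)) : Finset (G × H)) : Set (G × H)) := by
      rw [Finset.coe_image, Finset.coe_image, ← Set.image_comp]
      rfl
    rw [himg] at this
    exact this
  have hvcard : v.card ≤ mRank H := ht2 C D v hCD hCn hi hii
  have hscard : s.card = A.card + B.card := by
    rw [hB]
    have h1 : A.card ≤ s.card := Finset.card_le_card hA_sub
    rw [Finset.card_sdiff_of_subset hA_sub]
    omega
  rw [hscard]
  have : B.card ≤ mRank H := hv_card ▸ hvcard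
  omega

end PartD

section PartE
variable {H : Type*} [Group H]

instance finite_subgroup [Finite H] : Finite (Subgroup H) :=
  Finite.of_injective (fun K => (K : Set H)) SetLike.coe_injective

lemma exists_coatom_le [Finite H] (X : Subgroup H) (hX : X ≠ ⊤) :
    ∃ M : Subgroup H, IsCoatom M ∧ X ≤ M := by
  set SS : Set (Subgroup H) := {Y | X ≤ Y ∧ Y ≠ ⊤} with hSS
  have hfin : SS.Finite := Set.toFinite _
  have hne : SS.Nonempty := ⟨X, le_refl X, hX⟩
  obtain ⟨M, hM, hmax⟩ : ∃ a ∈ SS, ∀ a' ∈ SS, id a ≤ id a' → id a = id a' := by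
    obtain ⟨i, hi⟩ := hfin.exists_maximal hne
    exact ⟨i, hi.prop, fun a' ha' hle => le_antisymm hle (hi.le_of_ge ha' hle)⟩
  refine ⟨M, ⟨hM.2, ?_⟩, hM.1⟩
  intro Z hZ
  by_contra hZtop
  have hZSS : Z ∈ SS := ⟨hM.1.trans hZ.le, hZtop⟩
  exact absurd (hmax Z hZSS hZ.le) (ne_of_lt hZ)

lemma isCoatom_comap_conj [Finite H] {M : Subgroup H} (hM : IsCoatom M) (g : H) :
    IsCoatom (Subgroup.comap ((MulAut.conj g).toMonoidHom) M) := by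
  set cm := Subgroup.comap ((MulAut.conj g).toMonoidHom) M with hcm
  have hmem : ∀ x : H, x ∈ cm ↔ g * x * g⁻¹ ∈ M := by
    intro x
    rw [hcm, Subgroup.mem_comap]
    rfl
  constructor
  · intro hcon
    apply hM.1
    rw [eq_top_iff]
    intro y _
    have : g⁻¹ * y * g ∈ cm := by rw [hcon]; trivial
    rw [hmem] at this
    have heq : g * (g⁻¹ * y * g) * g⁻¹ = y := by group
    rwa [heq] at this
  · intro Z hZ
    set Z' := Subgroup.comap ((MulAut.conj g⁻¹).toMonoidHom) Z with hZ'
    have hmemZ' : ∀ x : H, x ∈ Z' ↔ g⁻¹ * x * g ∈ Z := by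
      intro x
      rw [hZ', Subgroup.mem_comap]
      simp [MulAut.conj]
    have h1 : M < Z' := by
      rw [SetLike.lt_iff_le_and_exists]
      constructor
      · intro m hm
        rw [hmemZ']
        apply hZ.le
        rw [hmem]
        have heq : g * (g⁻¹ * m * g) * g⁻¹ = m := by group
        rwa [heq]
      · obtain ⟨z, hzZ, hzcm⟩ := SetLike.exists_of_lt hZ
        refine ⟨g * z * g⁻¹, ?_, ?_⟩
        · rw [hmemZ']
          have heq : g⁻¹ * (g * z * g⁻¹) * g = z := by group
          rwa [heq]
        · intro hmm
          apply hzcm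
          rw [hmem]
          exact hmm
    have h2 : Z' = ⊤ := hM.2 Z' h1
    rw [eq_top_iff]
    intro y _
    have : g * y * g⁻¹ ∈ Z' := by rw [h2]; trivial
    rw [hmemZ'] at this
    have heq : g⁻¹ * (g * y * g⁻¹) * g = y := by group
    rwa [heq] at this

lemma exists_proper_conjCl_top [Finite H] (v : Finset H)
    (hncl : conjCl ⊤ (v : Set H) = ⊤) (hv : Subgroup.closure (v : Set H) ≠ ⊤) :
    ∃ M : Subgroup H, M ≠ ⊤ ∧ conjCl M (v : Set H) = ⊤ := by
  by_contra hcon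
  push_neg at hcon
  -- every coatom contains v
  have hvM : ∀ M : Subgroup H, IsCoatom M → (v : Set H) ⊆ M := by
    intro M hM
    have hQ : conjCl M (v : Set H) ≠ ⊤ := hcon M hM.1
    have hQle : conjCl M (v : Set H) ≤ M := by
      by_contra hnle
      have hsup : M ⊔ conjCl M (v : Set H) = ⊤ := by
        apply hM.2
        rw [lt_iff_le_and_ne]
        refine ⟨le_sup_left, ?_⟩
        intro heq
        apply hnle
        conv_rhs => rw [heq]
        exact le_sup_right
      -- Q is normal
      have hnorm : (conjCl M (v : Set H)).Normal := by
        rw [← Subgroup.normalizer_eq_top_iff]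
        rw [eq_top_iff, ← hsup]
        apply sup_le
        · intro m hm
          rw [Subgroup.mem_normalizer_iff]
          intro x
          constructor
          · intro hx; exact conjCl_conj_mem hm hx
          · intro hx
            have := conjCl_conj_mem (inv_mem hm) hx
            have heq : m⁻¹ * (m * x * m⁻¹) * m⁻¹⁻¹ = x := by group
            rwa [heq] at this
        · exact Subgroup.le_normalizer
      apply hQ
      rw [eq_top_iff, ← hncl]
      apply conjCl_le
      intro d _ x hx
      exact hnorm.conj_mem x (subset_conjCl hx) d
    exact fun x hx => hQle (subset_conjCl hx)
  -- pick one coatom above closure v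
  obtain ⟨M₀, hM₀, -⟩ := exists_coatom_le (Subgroup.closure (v : Set H)) hv
  -- normal closure of v is inside M₀
  have : conjCl ⊤ (v : Set H) ≤ M₀ := by
    apply conjCl_le
    intro g _ x hx
    have hcoatom : IsCoatom (Subgroup.comap ((MulAut.conj g).toMonoidHom) M₀) :=
      isCoatom_comap_conj hM₀ g
    have hxmem := hvM _ hcoatom hx
    have hxmem2 : x ∈ Subgroup.comap ((MulAut.conj g).toMonoidHom) M₀ :=
      SetLike.mem_coe.mp hxmem
    rw [Subgroup.mem_comap] at hxmem2
    simpa [MulAut.conj] using hxmem2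
  rw [hncl] at this
  exact hM₀.1 (top_le_iff.mp this)

end PartE

section PartF
variable {H : Type*} [Group H]

lemma prod_case [Finite H] [DecidableEq H] (D : Subgroup H) (hDtop : D ≠ ⊤) (v : Finset H)
    (hQ : conjCl D (v : Set H) = ⊤)
    (hirr : ∀ h ∈ v, h ∉ conjCl D ((v.erase h : Finset H) : Set H))
    (ht2D : ∀ (C' D' : Subgroup ↥D) (v' : Finset ↥D), C' ≤ D' →
      (∀ d ∈ D', ∀ c ∈ C', d * c * d⁻¹ ∈ C') →
      C' ⊔ conjCl D' (v' : Set ↥D) = ⊤ →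
      (∀ h ∈ v', h ∉ C' ⊔ conjCl D' ((v'.erase h : Finset ↥D) : Set ↥D)) →
      v'.card ≤ mRank ↥D) :
    v.card ≤ mRank H := by
  classical
  obtain ⟨a, ha_irr, ha_gen, ha_card⟩ := exists_mRank_attained ↥D
  set Δ : ↥D →* H × ↥D := MonoidHom.prod D.subtype (MonoidHom.id ↥D) with hΔ
  have hΔapp : ∀ δ : ↥D, Δ δ = ((δ : H), δ) := fun δ => rfl
  set wv : Finset (H × ↥D) := v.image (fun h => (h, (1 : ↥D))) with hwv
  set wa : Finset (H × ↥D) := a.image Δ with hwa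
  set w : Finset (H × ↥D) := wv ∪ wa with hw
  have h1v : (1 : H) ∉ v := by
    intro h1
    exact hirr 1 h1 (one_mem _)
  -- all Δ δ are in the closure of w
  have hΔmem : ∀ δ : ↥D, Δ δ ∈ Subgroup.closure (w : Set (H × ↥D)) := by
    intro δ
    have : δ ∈ Subgroup.closure (a : Set ↥D) := by rw [ha_gen]; trivial
    have h2 := memClosureImage Δ this
    refine Subgroup.closure_mono ?_ h2
    intro x hx
    rw [hw]
    simp only [Finset.coe_union, Set.mem_union]
    right
    rw [hwa, Finset.coe_image]
    exact hx
  -- generation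
  have hgen : Subgroup.closure (w : Set (H × ↥D)) = ⊤ := by
    have hHone : ∀ x : H, ((x, (1 : ↥D)) : H × ↥D) ∈ Subgroup.closure (w : Set (H × ↥D)) := by
      have hT' : ∀ x ∈ conjCl D (v : Set H),
          ((x, (1 : ↥D)) : H × ↥D) ∈ Subgroup.closure (w : Set (H × ↥D)) := by
        intro x hx
        induction hx using Subgroup.closure_induction with
        | mem y hy =>
          obtain ⟨d, hd, s, hs, rfl⟩ := hy
          have hsv : ((s, (1 : ↥D)) : H × ↥D) ∈ Subgroup.closure (w : Set (H × ↥D)) := by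
            apply Subgroup.subset_closure
            rw [hw]
            simp only [Finset.coe_union, Set.mem_union]
            left
            rw [hwv, Finset.coe_image]
            exact ⟨s, hs, rfl⟩
          have hδ := hΔmem ⟨d, hd⟩
          have heq : ((d * s * d⁻¹, (1 : ↥D)) : H × ↥D) =
              Δ ⟨d, hd⟩ * (s, (1 : ↥D)) * (Δ ⟨d, hd⟩)⁻¹ := by
            rw [hΔapp]
            apply Prod.ext
            · simp
            · simp
          rw [heq]
          exact mul_mem (mul_mem hδ hsv) (inv_mem hδ)
        | one => exact one_mem _
        | mul y z _ _ hy hz =>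
          have heq : ((y * z, (1 : ↥D)) : H × ↥D) = (y, (1:↥D)) * (z, (1:↥D)) := by simp
          rw [heq]; exact mul_mem hy hz
        | inv y _ hy =>
          have heq : ((y⁻¹, (1 : ↥D)) : H × ↥D) = ((y, (1:↥D)) : H × ↥D)⁻¹ := by simp
          rw [heq]; exact inv_mem hy
      intro x
      apply hT'
      rw [hQ]; trivial
    rw [eq_top_iff]
    rintro ⟨x, δ⟩ -
    have heq : ((x, δ) : H × ↥D) = (x * (δ : H)⁻¹, (1 : ↥D)) * Δ δ := by
      rw [hΔapp]
      apply Prod.ext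
      · simp
      · simp
    rw [heq]
    exact mul_mem (hHone _) (hΔmem δ)
  -- irredundance
  have hirr_w : Irredundant w := by
    rintro ⟨x, δ⟩ hxδ hmem
    rw [hw] at hxδ
    rcases Finset.mem_union.mp hxδ with hx | hx
    · -- v-part
      obtain ⟨h, hh, heq⟩ := Finset.mem_image.mp (hwv ▸ hx)
      have hδ1 : δ = 1 := (congrArg Prod.snd heq).symm
      have hxh : h = x := congrArg Prod.fst heq
      subst hδ1; subst hxh
      set P : Subgroup H := conjCl D ((v.erase h : Finset H) : Set H) with hP
      set Z : Subgroup (H × ↥D) :=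
        { carrier := {p : H × ↥D | p.1 * ((p.2 : H))⁻¹ ∈ P},
          one_mem' := by simp [one_mem],
          mul_mem' := by
            rintro ⟨x₁, δ₁⟩ ⟨x₂, δ₂⟩ h₁ h₂
            simp only [Set.mem_setOf_eq] at h₁ h₂ ⊢
            show (x₁ * x₂) * ((((δ₁ * δ₂) : ↥D) : H))⁻¹ ∈ P
            have heq2 : (x₁ * x₂) * ((((δ₁ * δ₂) : ↥D) : H))⁻¹ =
                (x₁ * (δ₁ : H)⁻¹) * ((δ₁ : H) * (x₂ * ((δ₂ : H))⁻¹) * ((δ₁ : H))⁻¹) := by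
              push_cast
              group
            rw [heq2]
            exact mul_mem h₁ (conjCl_conj_mem δ₁.2 h₂)
          inv_mem' := by
            rintro ⟨x₁, δ₁⟩ h₁
            simp only [Set.mem_setOf_eq] at h₁ ⊢
            show (x₁⁻¹) * (((δ₁⁻¹ : ↥D) : H))⁻¹ ∈ P
            have heq2 : (x₁⁻¹) * (((δ₁⁻¹ : ↥D) : H))⁻¹ =
                ((δ₁ : H))⁻¹ * (x₁ * ((δ₁ : H))⁻¹)⁻¹ * (((δ₁ : H))⁻¹)⁻¹ := by
              push_cast
              group
            rw [heq2]
            exact conjCl_conj_mem (inv_mem δ₁.2) (inv_mem h₁) } with hZ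
      have hle : Subgroup.closure ((w : Set (H × ↥D)) \ {((h, (1 : ↥D)) : H × ↥D)}) ≤ Z := by
        apply Subgroup.closure_le _ |>.mpr
        rintro ⟨y, ε⟩ ⟨hyw, hyne⟩
        rw [hw] at hyw
        simp only [Finset.coe_union, Set.mem_union] at hyw
        rcases hyw with hy | hy
        · rw [hwv, Finset.coe_image] at hy
          obtain ⟨h', hh', heq'⟩ := hy
          have hε : ε = 1 := (congrArg Prod.snd heq').symm
          have hy' : h' = y := congrArg Prod.fst heq'
          subst hε; subst hy'
          show h' * ((1 : ↥D) : H)⁻¹ ∈ P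
          have hne : h' ≠ h := by
            intro hcon
            apply hyne
            rw [hcon]
            rfl
          have : h' ∈ P := subset_conjCl (by
            rw [Finset.coe_erase]
            exact ⟨hh', hne⟩)
          simpa using this
        · rw [hwa, Finset.coe_image] at hy
          obtain ⟨ε', hε', heq'⟩ := hy
          rw [hΔapp] at heq'
          have h1 : (ε' : H) = y := congrArg Prod.fst heq'
          have h2 : ε' = ε := congrArg Prod.snd heq'
          subst h2
          show y * ((ε' : H))⁻¹ ∈ P
          rw [← h1]
          simpa using one_mem P
      have := hle hmem
      have hfin : h * ((1 : ↥D) : H)⁻¹ ∈ P := this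
      apply hirr h hh
      have hfin2 : h ∈ P := by simpa using hfin
      exact hfin2
    · -- a-part
      obtain ⟨δ₀, hδ₀, heq⟩ := Finset.mem_image.mp (hwa ▸ hx)
      rw [hΔapp] at heq
      have h1 : (δ₀ : H) = x := congrArg Prod.fst heq
      have h2 : δ₀ = δ := congrArg Prod.snd heq
      subst h2
      have hmem2 := memClosureImage (MonoidHom.snd H ↥D) hmem
      simp only [MonoidHom.coe_snd] at hmem2
      have hsub : Prod.snd '' ((w : Set (H × ↥D)) \ {((x, δ₀) : H × ↥D)}) ⊆
          insert (1 : ↥D) ((a.erase δ₀ : Finset ↥D) : Set ↥D) := by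
        rintro ε ⟨⟨y, ε'⟩, ⟨hyw, hyne⟩, rfl⟩
        rw [hw] at hyw
        simp only [Finset.coe_union, Set.mem_union] at hyw
        rcases hyw with hy | hy
        · rw [hwv, Finset.coe_image] at hy
          obtain ⟨h', _, heq'⟩ := hy
          have hε : ε' = 1 := (congrArg Prod.snd heq').symm
          left; exact hε
        · rw [hwa, Finset.coe_image] at hy
          obtain ⟨ε'', hε'', heq'⟩ := hy
          rw [hΔapp] at heq'
          have h3 : ε'' = ε' := congrArg Prod.snd heq'
          subst h3
          right
          rw [Finset.coe_erase]
          refine ⟨hε'', ?_⟩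
          intro hcon
          apply hyne
          have h4 : (ε'' : H) = y := congrArg Prod.fst heq'
          simp only [Set.mem_singleton_iff] at hcon ⊢
          rw [← h4, hcon, ← h1]
      have hmem3 := Subgroup.closure_mono hsub hmem2
      rw [closureInsertOne] at hmem3
      have hδ0x : (δ₀ : H) * ((δ₀ : H))⁻¹ = 1 := by group
      apply ha_irr δ₀ hδ₀
      rw [irredundant_coe_erase]
      have : Prod.snd ((x, δ₀) : H × ↥D) = δ₀ := rfl
      exact hmem3
  -- cardinality
  have hdisj : Disjoint wv wa := by
    rw [Finset.disjoint_left]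
    rintro ⟨y, ε⟩ hy hz
    obtain ⟨h', _, heq'⟩ := Finset.mem_image.mp (hwv ▸ hy)
    obtain ⟨δ', hδ', heq''⟩ := Finset.mem_image.mp (hwa ▸ hz)
    rw [hΔapp] at heq''
    have h1 : ε = 1 := (congrArg Prod.snd heq').symm
    have h2 : δ' = ε := congrArg Prod.snd heq''
    rw [h1] at h2
    subst h2
    exact one_not_mem_irredundant ha_irr hδ'
  have hcard : w.card = v.card + a.card := by
    rw [hw, Finset.card_union_of_disjoint hdisj, hwv, hwa]
    congr 1
    · apply Finset.card_image_of_injective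
      intro x y hxy
      exact congrArg Prod.fst hxy
    · apply Finset.card_image_of_injective
      intro x y hxy
      rw [hΔapp, hΔapp] at hxy
      exact congrArg Prod.snd hxy
  have hDfin : Finite ↥D := inferInstance
  have hle1 : w.card ≤ mRank (H × ↥D) := card_le_mRank hirr_w hgen
  have hle2 : mRank (H × ↥D) ≤ mRank H + mRank ↥D := main_le ht2D
  rw [hcard, ha_card] at hle1
  have := hle1.trans hle2
  omega

end PartF

section PartG
variable {H : Type*} [Group H]

open Pointwise in
set_option maxHeartbeats 1000000 in
lemma step_lemma [Finite H] [DecidableEq H] (C D : Subgroup H) (v : Finset H)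
    (hCD : C ≤ D) (hCn : ∀ d ∈ D, ∀ c ∈ C, d * c * d⁻¹ ∈ C)
    (hi : C ⊔ conjCl D (v : Set H) = ⊤)
    (hii : ∀ h ∈ v, h ∉ C ⊔ conjCl D ((v.erase h : Finset H) : Set H))
    (hQ : conjCl D (v : Set H) ≠ ⊤) :
    ∃ (C' : Subgroup H) (x : H), C' ≤ D ∧ (∀ d ∈ D, ∀ c ∈ C', d * c * d⁻¹ ∈ C') ∧
      x ∉ v ∧ x ∉ Subgroup.closure (v : Set H) ∧
      C' ⊔ conjCl D ((insert x v : Finset H) : Set H) = ⊤ ∧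
      (∀ h ∈ insert x v, h ∉ C' ⊔ conjCl D (((insert x v).erase h : Finset H) : Set H)) := by
  classical
  set Q : Subgroup H := conjCl D (v : Set H) with hQdef
  have hQnormal : Q.Normal := by
    rw [← Subgroup.normalizer_eq_top_iff, eq_top_iff, ← hi]
    apply sup_le
    · intro c hc
      rw [Subgroup.mem_normalizer_iff]
      intro x
      constructor
      · intro hx; exact conjCl_conj_mem (hCD hc) hx
      · intro hx
        have := conjCl_conj_mem (inv_mem (hCD hc)) hx
        have heq : c⁻¹ * (c * x * c⁻¹) * c⁻¹⁻¹ = x := by group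
        rwa [heq] at this
    · exact Subgroup.le_normalizer
  haveI := hQnormal
  have hvQ : ∀ h ∈ v, h ∈ Q := fun h hh => subset_conjCl (Finset.mem_coe.mpr hh)
  have hclv : Subgroup.closure (v : Set H) ≤ Q := closure_le_conjCl
  have hQle : ∀ S : Set H, (v : Set H) ⊆ S → Q ≤ conjCl D S := by
    intro S hS
    rw [hQdef]
    exact conjCl_mono (le_refl D) hS
  clear_value Q
  -- the quotient
  set mk : H →* H ⧸ Q := QuotientGroup.mk' Q with hmk
  have hmk_surj : Function.Surjective mk := QuotientGroup.mk'_surjective Q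
  have hker : mk.ker = Q := QuotientGroup.ker_mk' Q
  -- maximal proper normal subgroup of the quotient
  set 𝒮 : Set (Subgroup (H ⧸ Q)) := {N | N.Normal ∧ N ≠ ⊤} with h𝒮
  have hbot : (⊥ : Subgroup (H ⧸ Q)) ∈ 𝒮 := by
    refine ⟨inferInstance, ?_⟩
    · intro hcon
      apply hQ
      rw [eq_top_iff]
      intro x _
      have : mk x ∈ (⊤ : Subgroup (H ⧸ Q)) := trivial
      rw [← hcon] at this
      have hx1 : mk x = 1 := this
      rw [hmk] at hx1
      have := (QuotientGroup.eq_one_iff x).mp hx1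
      exact this
  have hfin : 𝒮.Finite := Set.toFinite _
  obtain ⟨N, hN𝒮, hNmax⟩ : ∃ a ∈ 𝒮, ∀ a' ∈ 𝒮, id a ≤ id a' → id a = id a' := by
    obtain ⟨i, hi⟩ := hfin.exists_maximal ⟨⊥, hbot⟩
    exact ⟨i, hi.prop, fun a' ha' hle => le_antisymm hle (hi.le_of_ge ha' hle)⟩
  obtain ⟨hNnormal, hNtop⟩ := hN𝒮
  set M : Subgroup H := N.comap mk with hM
  have hQM : Q ≤ M := by
    intro q hq
    rw [hM, Subgroup.mem_comap]
    have : mk q = 1 := by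
      rw [hmk]; exact (QuotientGroup.eq_one_iff q).mpr hq
    rw [this]; exact one_mem N
  have hMtop : M ≠ ⊤ := by
    intro hcon
    apply hNtop
    rw [eq_top_iff]
    intro y _
    obtain ⟨x, rfl⟩ := hmk_surj y
    have : x ∈ M := by rw [hcon]; trivial
    rwa [hM, Subgroup.mem_comap] at this
  have hMnormal : M.Normal := Subgroup.Normal.comap hNnormal mk
  -- pick x ∈ C \ M
  have hCM : ¬(C ≤ M) := by
    intro hle
    apply hMtop
    rw [eq_top_iff, ← hi]
    exact sup_le hle hQM
  obtain ⟨x, hxC, hxM⟩ := SetLike.not_le_iff_exists.mp hCM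
  set C' : Subgroup H := C ⊓ M with hC'
  have hC'D : C' ≤ D := inf_le_left.trans hCD
  have hC'n : ∀ d ∈ D, ∀ c ∈ C', d * c * d⁻¹ ∈ C' := by
    intro d hd c hc
    obtain ⟨hc1, hc2⟩ := Subgroup.mem_inf.mp hc
    exact Subgroup.mem_inf.mpr ⟨hCn d hd c hc1, hMnormal.conj_mem c hc2 d⟩
  have hxv : x ∉ v := fun hxv => hxM (hQM (hvQ x hxv))
  have hxcl : x ∉ Subgroup.closure (v : Set H) := fun hx => hxM (hQM (hclv hx))
  refine ⟨C', x, hC'D, hC'n, hxv, hxcl, ?_, ?_⟩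
  · -- (i) for the new configuration
    set X : Subgroup H := C' ⊔ conjCl D ((insert x v : Finset H) : Set H) with hX
    have hQX : Q ≤ X := by
      refine le_trans (hQle _ ?_) le_sup_right
      rw [Finset.coe_insert]
      exact Set.subset_insert _ _
    have hmapD : D.map mk = ⊤ := by
      have hmapCQ : (C ⊔ Q).map mk = ⊤ := by
        rw [hi, ← top_le_iff]
        intro y _
        obtain ⟨z, rfl⟩ := hmk_surj y
        exact ⟨z, trivial, rfl⟩
      have hmapQ : Q.map mk = ⊥ := by
        rw [eq_bot_iff]
        rintro y ⟨q, hq, rfl⟩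
        rw [hmk]
        have : QuotientGroup.mk' Q q = 1 := (QuotientGroup.eq_one_iff q).mpr hq
        simpa using this
      rw [Subgroup.map_sup, hmapQ, sup_bot_eq] at hmapCQ
      rw [eq_top_iff, ← hmapCQ]
      exact Subgroup.map_mono hCD
    have hmapX : X.map mk = ⊤ := by
      have hsub1 : N ≤ (C' : Subgroup H).map mk := by
        have hNM : N = M.map mk := by
          rw [hM]
          exact (Subgroup.map_comap_eq_self_of_surjective hmk_surj N).symm
        rw [hNM]
        rintro y ⟨m, hm, rfl⟩
        have hmCQ : m ∈ C ⊔ Q := by rw [hi]; trivial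
        haveI := hQnormal
        have hmprod : m ∈ (C : Set H) * (Q : Set H) := by
          rw [← Subgroup.mul_normal]
          exact hmCQ
        obtain ⟨c, hc, q, hq, rfl⟩ := hmprod
        have hcM : c ∈ M := by
          have : c = (c * q) * q⁻¹ := by group
          rw [this]
          exact mul_mem hm (inv_mem (hQM hq))
        refine ⟨c, Subgroup.mem_inf.mpr ⟨hc, hcM⟩, ?_⟩
        rw [hmk]
        have hq1 : QuotientGroup.mk' Q q = 1 := (QuotientGroup.eq_one_iff q).mpr hq
        have hmul : QuotientGroup.mk' Q (c * q) = QuotientGroup.mk' Q c *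
            QuotientGroup.mk' Q q := by simp
        rw [hmul, hq1, mul_one]
      have hmid : conjCl (D.map mk) (mk '' ((insert x v : Finset H) : Set H)) ≤
          (conjCl D ((insert x v : Finset H) : Set H)).map mk := conjCl_map_ge mk
      have hsub2 : conjCl ⊤ ({mk x} : Set (H ⧸ Q)) ≤
          (conjCl D ((insert x v : Finset H) : Set H)).map mk := by
        refine le_trans ?_ hmid
        apply conjCl_mono (le_of_eq hmapD.symm)
        intro y hy
        rw [Set.mem_singleton_iff] at hy
        subst hy
        exact ⟨x, by rw [Finset.coe_insert]; exact Set.mem_insert _ _, rfl⟩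
      have hsup : N ⊔ conjCl ⊤ ({mk x} : Set (H ⧸ Q)) = ⊤ := by
        by_contra hcon
        have hnorm1 : (N ⊔ conjCl ⊤ ({mk x} : Set (H ⧸ Q))).Normal := by
          apply sup_normal hNnormal
          exact conjCl_top_normal
        have hP𝒮 : (N ⊔ conjCl ⊤ ({mk x} : Set (H ⧸ Q))) ∈ 𝒮 := ⟨hnorm1, hcon⟩
        have := hNmax _ hP𝒮 le_sup_left
        simp only [id] at this
        have hxN : mk x ∈ N := by
          rw [this]
          exact Subgroup.mem_sup_right (subset_conjCl rfl)
        apply hxM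
        rwa [hM, Subgroup.mem_comap]
      rw [eq_top_iff, ← hsup]
      apply sup_le
      · refine hsub1.trans ?_
        rw [hX, Subgroup.map_sup]
        exact le_sup_left
      · refine hsub2.trans ?_
        rw [hX, Subgroup.map_sup]
        exact le_sup_right
    -- conclude X = ⊤
    have : X = (X.map mk).comap mk := (Subgroup.comap_map_eq_self (by rw [hker]; exact hQX)).symm
    rw [this, hmapX]
    rw [eq_top_iff]
    intro y _
    exact Subgroup.mem_comap.mpr trivial
  · -- (ii) for the new configuration
    intro h hh
    rcases Finset.mem_insert.mp hh with rfl | hhv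
    · rw [Finset.erase_insert hxv]
      intro hcon
      have hle : C' ⊔ conjCl D (v : Set H) ≤ M :=
        sup_le inf_le_right (hQdef ▸ hQM)
      exact hxM (hle hcon)
    · have hne : x ≠ h := fun hcon => hxv (hcon ▸ hhv)
      rw [Finset.erase_insert_of_ne (fun hcon => hxv (hcon ▸ hhv) : x ≠ h)]
      intro hcon
      apply hii h hhv
      have hle : C' ⊔ conjCl D ((insert x (v.erase h) : Finset H) : Set H) ≤
          C ⊔ conjCl D ((v.erase h : Finset H) : Set H) := by
        apply sup_le (inf_le_left.trans le_sup_left)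
        apply conjCl_le
        intro d hd s hs
        rw [Finset.coe_insert] at hs
        rcases hs with rfl | hs
        · exact Subgroup.mem_sup_left (hCn d hd s hxC)
        · exact Subgroup.mem_sup_right (conjCl_gen_mem hd hs)
      exact hle hcon

end PartG

section PartH
section Cards
variable {H : Type*} [Group H] [Finite H]

lemma subCardLt {K L : Subgroup H} (h : K < L) : Nat.card ↥K < Nat.card ↥L := by
  have h1 : (K : Set H) ⊂ (L : Set H) := by
    rw [Set.ssubset_iff_of_subset (SetLike.coe_subset_coe.mpr h.le)]
    obtain ⟨x, hxL, hxK⟩ := SetLike.exists_of_lt h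
    exact ⟨x, hxL, hxK⟩
  have e1 : Nat.card ↥K = (K : Set H).ncard := Nat.card_coe_set_eq _
  have e2 : Nat.card ↥L = (L : Set H).ncard := Nat.card_coe_set_eq _
  rw [e1, e2]
  exact Set.ncard_lt_ncard h1 (Set.toFinite _)

lemma subCardLe {K L : Subgroup H} (h : K ≤ L) : Nat.card ↥K ≤ Nat.card ↥L := by
  have e1 : Nat.card ↥K = (K : Set H).ncard := Nat.card_coe_set_eq _
  have e2 : Nat.card ↥L = (L : Set H).ncard := Nat.card_coe_set_eq _
  rw [e1, e2]
  exact Set.ncard_le_ncard (SetLike.coe_subset_coe.mpr h) (Set.toFinite _)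

lemma card_top_eq : Nat.card ↥(⊤ : Subgroup H) = Nat.card H :=
  Nat.card_congr Subgroup.topEquiv.toEquiv

lemma card_subgroup_lt_top {K : Subgroup H} (h : K ≠ ⊤) : Nat.card ↥K < Nat.card H := by
  rw [show Nat.card H = Nat.card ↥(⊤ : Subgroup H) from card_top_eq.symm]
  exact subCardLt (lt_top_iff_ne_top.mpr h)

lemma card_subgroup_le_top (K : Subgroup H) : Nat.card ↥K ≤ Nat.card H := by
  rw [show Nat.card H = Nat.card ↥(⊤ : Subgroup H) from card_top_eq.symm]
  exact subCardLe le_top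

end Cards

lemma T2aux : ∀ (n : ℕ), ∀ (H : Type u) [Group H] [Finite H] [DecidableEq H],
    Nat.card H ≤ n → ∀ (k : ℕ), ∀ (C D : Subgroup H) (v : Finset H),
    Nat.card H - Nat.card ↥(Subgroup.closure (v : Set H)) ≤ k →
    C ≤ D → (∀ d ∈ D, ∀ c ∈ C, d * c * d⁻¹ ∈ C) →
    C ⊔ conjCl D (v : Set H) = ⊤ →
    (∀ h ∈ v, h ∉ C ⊔ conjCl D ((v.erase h : Finset H) : Set H)) →
    v.card ≤ mRank H := by
  intro n
  induction n using Nat.strong_induction_on with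
  | _ n ihn =>
  intro H _ _ _ hHn k
  induction k using Nat.strong_induction_on with
  | _ k ihk =>
  intro C D v hk hCD hCn hi hii
  by_cases hv : Subgroup.closure (v : Set H) = ⊤
  · -- terminal: v is an irredundant generating set
    have hv_irr : Irredundant v := by
      intro g hg hcon
      apply hii g hg
      rw [irredundant_coe_erase] at hcon
      exact Subgroup.mem_sup_right (closure_le_conjCl hcon)
    exact card_le_mRank hv_irr hv
  · by_cases hQ : conjCl D (v : Set H) = ⊤
    · -- product case
      have hirr' : ∀ h ∈ v, h ∉ conjCl D ((v.erase h : Finset H) : Set H) :=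
        fun h hh hcon => hii h hh (Subgroup.mem_sup_right hcon)
      by_cases hD : D = ⊤
      · subst hD
        obtain ⟨M, hMtop, hMQ⟩ := exists_proper_conjCl_top v hQ hv
        have hirrM : ∀ h ∈ v, h ∉ conjCl M ((v.erase h : Finset H) : Set H) :=
          fun h hh hcon => hirr' h hh (conjCl_mono le_top (subset_refl _) hcon)
        refine prod_case M hMtop v hMQ hirrM ?_
        intro C' D' v' h1 h2 h3 h4
        exact ihn (Nat.card ↥M) (lt_of_lt_of_le (card_subgroup_lt_top hMtop) hHn) ↥M
          (le_refl _) (Nat.card ↥M) C' D' v' (Nat.sub_le _ _) h1 h2 h3 h4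
      · refine prod_case D hD v hQ hirr' ?_
        intro C' D' v' h1 h2 h3 h4
        exact ihn (Nat.card ↥D) (lt_of_lt_of_le (card_subgroup_lt_top hD) hHn) ↥D
          (le_refl _) (Nat.card ↥D) C' D' v' (Nat.sub_le _ _) h1 h2 h3 h4
    · -- recursive step
      obtain ⟨C', x, hC'D, hC'n, hxv, hxcl, hi', hii'⟩ :=
        step_lemma C D v hCD hCn hi hii hQ
      have hclv_lt : Subgroup.closure (v : Set H) <
          Subgroup.closure ((insert x v : Finset H) : Set H) := by
        refine lt_of_le_of_ne (Subgroup.closure_mono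
          (by rw [Finset.coe_insert]; exact Set.subset_insert _ _)) ?_
        intro heq
        apply hxcl
        rw [heq]
        exact Subgroup.subset_closure (by rw [Finset.coe_insert]; exact Set.mem_insert _ _)
      have hcard_lt := subCardLt hclv_lt
      have h1 : Nat.card ↥(Subgroup.closure (v : Set H)) < Nat.card H :=
        card_subgroup_lt_top hv
      have hmeasure : Nat.card H - Nat.card ↥(Subgroup.closure
          ((insert x v : Finset H) : Set H)) <
          Nat.card H - Nat.card ↥(Subgroup.closure (v : Set H)) :=
        Nat.sub_lt_sub_left h1 hcard_lt
      have hres := ihk (Nat.card H - Nat.card ↥(Subgroup.closure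
          ((insert x v : Finset H) : Set H))) (lt_of_lt_of_le hmeasure hk)
        C' D (insert x v) (le_refl _) hC'D hC'n hi' hii'
      rw [Finset.card_insert_of_notMem hxv] at hres
      omega

theorem T2 (H : Type u) [Group H] [Finite H] [DecidableEq H] :
    ∀ (C D : Subgroup H) (v : Finset H),
    C ≤ D → (∀ d ∈ D, ∀ c ∈ C, d * c * d⁻¹ ∈ C) →
    C ⊔ conjCl D (v : Set H) = ⊤ →
    (∀ h ∈ v, h ∉ C ⊔ conjCl D ((v.erase h : Finset H) : Set H)) →
    v.card ≤ mRank H := by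
  intro C D v h1 h2 h3 h4
  exact T2aux (Nat.card H) H (le_refl _) (Nat.card H - Nat.card
    ↥(Subgroup.closure (v : Set H))) C D v (le_refl _) h1 h2 h3 h4

end PartH

theorem stmt8 (G H : Type*) [Group G] [Group H] [Finite G] [Finite H] :
    mRank (G × H) = mRank G + mRank H := by
  classical
  apply le_antisymm
  · exact main_le (fun C D v h1 h2 h3 h4 => T2 H C D v h1 h2 h3 h4)
  · exact mRank_prod_ge
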